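/- With P_n = ∏_{i=0}^{n−1}(x − v^{2i+1} − v^{−2i−1}) ∈ ℤ[v,v⁻¹][x], for all m, n ≥ 0: P_m · P_n = Σ_{i=0}^{min(m,n)} ({m}_i · {n}_i · {m+n}_i / {i}!) · P_{m+n−i}, where {a}_i = {a}{a−1}⋯{a−i+1} and {i} = v^i − v^{−i}. -/

import Mathlib

/-- `v`, an indeterminate, as an element of the field `ℚ(v)` of rational functions. -/
noncomputable def vv : RatFunc ℚ := RatFunc.X

/-- The balanced `q`-integer `{m} = v^m - v^{-m}`. -/
noncomputable def bk (m : ℤ) : RatFunc ℚ := vv ^ m - vv ^ (-m)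

/-- The falling product `{a}_i = {a}{a-1}⋯{a-i+1}`. -/
noncomputable def bkp (a : ℤ) (i : ℕ) : RatFunc ℚ := ∏ j ∈ Finset.range i, bk (a - j)

/-- The balanced factorial `{n}! = {n}{n-1}⋯{1}`. -/
noncomputable def bfact (n : ℕ) : RatFunc ℚ := bkp n n

/-- The balanced binomial coefficient `[a choose b] = {a}_b / {b}!`. -/
noncomputable def bbinom (a : ℤ) (b : ℕ) : RatFunc ℚ := bkp a b / bfact b

/-- Chebyshev-type polynomials `V_0 = 1`, `V_1 = x`, `V_n = x V_{n-1} - V_{n-2}`. -/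
noncomputable def chebV : ℕ → Polynomial (RatFunc ℚ)
  | 0 => 1
  | 1 => Polynomial.X
  | (n + 2) => Polynomial.X * chebV (n + 1) - chebV n

/-- `P_n = ∏_{i=0}^{n-1} (x - v^{2i+1} - v^{-2i-1})`. -/
noncomputable def PP (n : ℕ) : Polynomial (RatFunc ℚ) :=
  ∏ i ∈ Finset.range n,
    (Polynomial.X - Polynomial.C (vv ^ (2 * i + 1) + vv ^ (-(2 * (i : ℤ) + 1))))

lemma hvv : vv ≠ 0 := RatFunc.X_ne_zero

lemma vv_pow_ne_one {n : ℕ} (hn : n ≠ 0) : vv ^ n ≠ 1 := by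
  intro h
  have h2 : algebraMap (Polynomial ℚ) (RatFunc ℚ) (Polynomial.X ^ n) = algebraMap _ _ 1 := by
    simpa [map_pow, RatFunc.algebraMap_X, vv] using h
  have h3 := RatFunc.algebraMap_injective ℚ h2
  have := congrArg Polynomial.natDegree h3
  simp [Polynomial.natDegree_X_pow] at this
  exact hn this

lemma vv_zpow_eq_one {k : ℤ} (h : vv ^ k = 1) : k = 0 := by
  by_contra hk
  rcases lt_trichotomy k 0 with hlt | h0 | hgt
  · have : vv ^ (-k) = 1 := by
      rw [zpow_neg, h, inv_one]
    have hk' : (-k).toNat ≠ 0 := by omega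
    apply vv_pow_ne_one hk'
    rw [← zpow_natCast, Int.toNat_of_nonneg (by omega)]
    exact this
  · exact hk h0
  · have hk' : k.toNat ≠ 0 := by omega
    apply vv_pow_ne_one hk'
    rw [← zpow_natCast, Int.toNat_of_nonneg (by omega)]
    exact h

lemma bk_zero : bk 0 = 0 := by simp [bk]

lemma bk_ne_zero {k : ℤ} (hk : k ≠ 0) : bk k ≠ 0 := by
  intro h
  have h1 : vv ^ k = vv ^ (-k) := by
    have := sub_eq_zero.mp h
    simpa [bk] using this
  have h2 : vv ^ (2 * k) = 1 := by
    have := congrArg (· * vv ^ k) h1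
    rw [← zpow_add₀ hvv, ← zpow_add₀ hvv] at this
    simpa [two_mul] using this
  have := vv_zpow_eq_one h2
  omega

lemma aux_field (P Q R : RatFunc ℚ) (hP : P ≠ 0) (hQ : Q ≠ 0) (hR : R ≠ 0) :
    (P - P⁻¹) * (Q - Q⁻¹) =
      (P / R - R / P) * (Q / R - R / Q) + (R - R⁻¹) * (P * Q / R - R / (P * Q)) := by
  have e1 : P - P⁻¹ = (P ^ 2 - 1) / P := by field_simp
  have e2 : Q - Q⁻¹ = (Q ^ 2 - 1) / Q := by field_simp
  have e3 : R - R⁻¹ = (R ^ 2 - 1) / R := by field_simp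
  have e4 : P / R - R / P = (P ^ 2 - R ^ 2) / (P * R) := by field_simp
  have e5 : Q / R - R / Q = (Q ^ 2 - R ^ 2) / (Q * R) := by field_simp
  have e6 : P * Q / R - R / (P * Q) = (P ^ 2 * Q ^ 2 - R ^ 2) / (P * Q * R) := by
    field_simp
  rw [e1, e2, e3, e4, e5, e6]
  rw [div_mul_div_comm, div_mul_div_comm, div_mul_div_comm, div_add_div _ _
    (by simp [hP, hQ, hR]) (by simp [hP, hQ, hR]), div_eq_div_iff
    (by simp [hP, hQ]) (by simp [hP, hQ, hR])]
  ring

lemma bk_mul (p q r : ℤ) : bk p * bk q = bk (p - r) * bk (q - r) + bk r * bk (p + q - r) := by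
  have h1 : ∀ s : ℤ, bk s = vv ^ s - (vv ^ s)⁻¹ := fun s => by rw [bk, zpow_neg]
  have h3 : ∀ s t : ℤ, bk (s - t) = vv ^ s / vv ^ t - vv ^ t / vv ^ s := fun s t => by
    rw [bk, neg_sub, zpow_sub₀ hvv, zpow_sub₀ hvv]
  have h5 : bk (p + q - r) = vv ^ p * vv ^ q / vv ^ r - vv ^ r / (vv ^ p * vv ^ q) := by
    rw [h3, zpow_add₀ hvv]
  rw [h1 p, h1 q, h1 r, h3 p r, h3 q r, h5]
  exact aux_field _ _ _ (zpow_ne_zero _ hvv) (zpow_ne_zero _ hvv) (zpow_ne_zero _ hvv)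

lemma bkp_zero (a : ℤ) : bkp a 0 = 1 := by simp [bkp]

lemma bkp_succ (a : ℤ) (i : ℕ) : bkp a (i + 1) = bkp a i * bk (a - i) :=
  Finset.prod_range_succ _ _

lemma bkp_succ' (a : ℤ) (i : ℕ) : bkp (a + 1) (i + 1) = bk (a + 1) * bkp a i := by
  rw [bkp, Finset.prod_range_succ', mul_comm]
  congr 1
  · simp
  · rw [bkp]
    apply Finset.prod_congr rfl
    intro j _
    congr 1
    push_cast
    ring

lemma bfact_succ (i : ℕ) : bfact (i + 1) = bk ((i : ℤ) + 1) * bfact i := by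
  rw [bfact, bfact]
  have h : ((i + 1 : ℕ) : ℤ) = (i : ℤ) + 1 := by push_cast; ring
  rw [h, bkp_succ']

lemma bfact_ne_zero (n : ℕ) : bfact n ≠ 0 := by
  rw [bfact, bkp]
  rw [Finset.prod_ne_zero_iff]
  intro j hj
  apply bk_ne_zero
  simp only [Finset.mem_range] at hj
  omega

lemma bkp_nat_eq_zero {a i : ℕ} (h : a < i) : bkp a i = 0 := by
  rw [bkp]
  apply Finset.prod_eq_zero (Finset.mem_range.mpr h)
  rw [sub_self]
  exact bk_zero

noncomputable def cf (m n i : ℕ) : RatFunc ℚ :=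
  bkp (m : ℤ) i * bkp (n : ℤ) i * bkp ((m : ℤ) + n) i / bfact i

lemma cf_zero (m n : ℕ) : cf m n 0 = 1 := by
  simp [cf, bkp_zero, bfact]

lemma cf_eq_zero {m n i : ℕ} (h : n < i) : cf m n i = 0 := by
  rw [cf, bkp_nat_eq_zero h]
  simp

lemma cf_eq_zero' {m n i : ℕ} (h : m < i) : cf m n i = 0 := by
  rw [cf, bkp_nat_eq_zero h]
  simp

lemma cf_rec (m n i : ℕ) :
    cf m (n + 1) (i + 1) =
      cf m n (i + 1) + cf m n i * (bk ((m : ℤ) + 2 * n + 1 - i) * bk ((m : ℤ) - i)) := by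
  have hF : bfact i ≠ 0 := bfact_ne_zero i
  have hE : bk ((i : ℤ) + 1) ≠ 0 := bk_ne_zero (by omega)
  have key : bkp (m : ℤ) (i + 1) * bkp ((n : ℤ) + 1) (i + 1) * bkp ((m : ℤ) + n + 1) (i + 1)
      = bkp (m : ℤ) (i + 1) * bkp (n : ℤ) (i + 1) * bkp ((m : ℤ) + n) (i + 1)
        + bkp (m : ℤ) i * bkp (n : ℤ) i * bkp ((m : ℤ) + n) i *
            (bk ((m : ℤ) + 2 * n + 1 - i) * bk ((m : ℤ) - i)) * bk ((i : ℤ) + 1) := by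
    have hb := bk_mul ((n : ℤ) + 1) ((m : ℤ) + n + 1) ((i : ℤ) + 1)
    rw [bkp_succ (m : ℤ) i, bkp_succ' (n : ℤ) i, bkp_succ' ((m : ℤ) + n) i,
      bkp_succ (n : ℤ) i, bkp_succ ((m : ℤ) + n) i]
    have e1 : (n : ℤ) + 1 - ((i : ℤ) + 1) = (n : ℤ) - i := by ring
    have e2 : (m : ℤ) + n + 1 - ((i : ℤ) + 1) = (m : ℤ) + n - i := by ring
    have e3 : (n : ℤ) + 1 + ((m : ℤ) + n + 1) - ((i : ℤ) + 1) = (m : ℤ) + 2 * n + 1 - i := by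
      ring
    rw [e1, e2, e3] at hb
    linear_combination (bkp (m : ℤ) i * bk ((m : ℤ) - i) * bkp (n : ℤ) i *
      bkp ((m : ℤ) + n) i) * hb
  rw [cf, cf, cf]
  have hc1 : ((n + 1 : ℕ) : ℤ) = (n : ℤ) + 1 := by push_cast; ring
  have hc2 : (m : ℤ) + ((n + 1 : ℕ) : ℤ) = (m : ℤ) + n + 1 := by push_cast; ring
  have h5 : bkp (m : ℤ) i * bkp (n : ℤ) i * bkp ((m : ℤ) + n) i / bfact i *
      (bk ((m : ℤ) + 2 * n + 1 - i) * bk ((m : ℤ) - i)) =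
      bkp (m : ℤ) i * bkp (n : ℤ) i * bkp ((m : ℤ) + n) i *
          (bk ((m : ℤ) + 2 * n + 1 - i) * bk ((m : ℤ) - i)) * bk ((i : ℤ) + 1) /
        (bk ((i : ℤ) + 1) * bfact i) := by
    field_simp
  rw [hc1, ← add_assoc, bfact_succ, key, h5, ← add_div]

noncomputable def aa (k : ℕ) : RatFunc ℚ := vv ^ (2 * k + 1) + vv ^ (-(2 * (k : ℤ) + 1))

lemma PP_succ (k : ℕ) : PP (k + 1) = PP k * (Polynomial.X - Polynomial.C (aa k)) :=
  Finset.prod_range_succ _ _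

lemma aa_sub (k n : ℕ) :
    aa k - aa n = bk ((k : ℤ) + n + 1) * bk ((k : ℤ) - n) := by
  have aux2 : ∀ X Y V : RatFunc ℚ, X ≠ 0 → Y ≠ 0 → V ≠ 0 →
      (X * Y * V - (X * Y * V)⁻¹) * (X / Y - Y / X) =
        (X ^ 2 * V + (X ^ 2 * V)⁻¹) - (Y ^ 2 * V + (Y ^ 2 * V)⁻¹) := by
    intro X Y V hX hY hV
    field_simp
    ring
  have hX : vv ^ (k : ℤ) ≠ 0 := zpow_ne_zero _ hvv
  have hY : vv ^ (n : ℤ) ≠ 0 := zpow_ne_zero _ hvv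
  have ek : ∀ j : ℕ, (vv ^ (2 * j + 1) + vv ^ (-(2 * (j : ℤ) + 1))) =
      (vv ^ (j : ℤ)) ^ 2 * vv + ((vv ^ (j : ℤ)) ^ 2 * vv)⁻¹ := by
    intro j
    have h1 : vv ^ (2 * j + 1) = (vv ^ (j : ℤ)) ^ 2 * vv := by
      rw [← zpow_natCast vv (2 * j + 1)]
      push_cast
      rw [zpow_add₀ hvv, two_mul, zpow_add₀ hvv, zpow_one, sq]
    have h2 : vv ^ (-(2 * (j : ℤ) + 1)) = ((vv ^ (j : ℤ)) ^ 2 * vv)⁻¹ := by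
      rw [zpow_neg, zpow_add₀ hvv, two_mul, zpow_add₀ hvv, zpow_one, sq]
    rw [h1, h2]
  have hb1 : bk ((k : ℤ) + n + 1) =
      vv ^ (k : ℤ) * vv ^ (n : ℤ) * vv - (vv ^ (k : ℤ) * vv ^ (n : ℤ) * vv)⁻¹ := by
    rw [bk, zpow_neg, zpow_add₀ hvv, zpow_add₀ hvv, zpow_one]
  have hb2 : bk ((k : ℤ) - n) = vv ^ (k : ℤ) / vv ^ (n : ℤ) - vv ^ (n : ℤ) / vv ^ (k : ℤ) := by
    rw [bk, neg_sub, zpow_sub₀ hvv, zpow_sub₀ hvv]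
  rw [aa, aa, ek k, ek n, hb1, hb2]
  exact (aux2 _ _ _ hX hY hvv).symm

lemma PP_step (k nn : ℕ) :
    PP k * (Polynomial.X - Polynomial.C (aa nn)) =
      PP (k + 1) + Polynomial.C (bk ((k : ℤ) + nn + 1) * bk ((k : ℤ) - nn)) * PP k := by
  rw [PP_succ, ← aa_sub, map_sub]
  ring

lemma key_lemma (m n : ℕ) :
    PP m * PP n = ∑ i ∈ Finset.range (n + 1), Polynomial.C (cf m n i) * PP (m + n - i) := by
  induction n with
  | zero =>
    have h0 : PP 0 = 1 := Finset.prod_range_zero _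
    rw [h0, mul_one, Finset.sum_range_one, cf_zero, map_one, one_mul]
    norm_num
  | succ n ih =>
    have hstep : ∀ i ∈ Finset.range (n + 1),
        Polynomial.C (cf m n i) * PP (m + n - i) * (Polynomial.X - Polynomial.C (aa n)) =
          Polynomial.C (cf m n i) * PP (m + n + 1 - i) +
            Polynomial.C (cf m n i * (bk ((m : ℤ) + 2 * n + 1 - i) * bk ((m : ℤ) - i))) *
              PP (m + n - i) := by
      intro i hi
      have hi' : i ≤ n := by
        simp only [Finset.mem_range] at hi
        omega
      have hcast : ((m + n - i : ℕ) : ℤ) = (m : ℤ) + n - i := by omega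
      have h1 := PP_step (m + n - i) n
      rw [hcast] at h1
      have e1 : (m : ℤ) + n - i + n + 1 = (m : ℤ) + 2 * n + 1 - i := by ring
      have e2 : (m : ℤ) + n - i - n = (m : ℤ) - i := by ring
      have e3 : m + n - i + 1 = m + n + 1 - i := by omega
      rw [e1, e2, e3] at h1
      rw [mul_assoc, h1, mul_add]
      simp only [map_mul]
      ring
    have hA : ∑ i ∈ Finset.range (n + 2), Polynomial.C (cf m n i) * PP (m + n + 1 - i) =
        (∑ j ∈ Finset.range (n + 1), Polynomial.C (cf m n (j + 1)) * PP (m + n - j)) +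
          PP (m + n + 1) := by
      rw [Finset.sum_range_succ' (fun i => Polynomial.C (cf m n i) * PP (m + n + 1 - i)) (n + 1)]
      simp only [show ∀ j : ℕ, m + n + 1 - (j + 1) = m + n - j from fun j => by omega,
        Nat.sub_zero, cf_zero, map_one, one_mul]
    have hB : ∑ i ∈ Finset.range (n + 2), Polynomial.C (cf m n i) * PP (m + n + 1 - i) =
        ∑ i ∈ Finset.range (n + 1), Polynomial.C (cf m n i) * PP (m + n + 1 - i) := by
      rw [Finset.sum_range_succ, cf_eq_zero (Nat.lt_succ_self n), map_zero, zero_mul, add_zero]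
    calc PP m * PP (n + 1)
        = (PP m * PP n) * (Polynomial.X - Polynomial.C (aa n)) := by rw [PP_succ]; ring
      _ = (∑ i ∈ Finset.range (n + 1), Polynomial.C (cf m n i) * PP (m + n - i)) *
            (Polynomial.X - Polynomial.C (aa n)) := by rw [ih]
      _ = ∑ i ∈ Finset.range (n + 1),
            Polynomial.C (cf m n i) * PP (m + n - i) * (Polynomial.X - Polynomial.C (aa n)) :=
          Finset.sum_mul _ _ _
      _ = ∑ i ∈ Finset.range (n + 1),
            (Polynomial.C (cf m n i) * PP (m + n + 1 - i) +
              Polynomial.C (cf m n i * (bk ((m : ℤ) + 2 * n + 1 - i) * bk ((m : ℤ) - i))) *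
                PP (m + n - i)) := Finset.sum_congr rfl hstep
      _ = (∑ i ∈ Finset.range (n + 1), Polynomial.C (cf m n i) * PP (m + n + 1 - i)) +
            ∑ i ∈ Finset.range (n + 1),
              Polynomial.C (cf m n i * (bk ((m : ℤ) + 2 * n + 1 - i) * bk ((m : ℤ) - i))) *
                PP (m + n - i) := Finset.sum_add_distrib
      _ = ∑ i ∈ Finset.range (n + 1 + 1), Polynomial.C (cf m (n + 1) i) * PP (m + (n + 1) - i) := by
          rw [Finset.sum_range_succ'
            (fun i => Polynomial.C (cf m (n + 1) i) * PP (m + (n + 1) - i)) (n + 1)]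
          simp only [show ∀ j : ℕ, m + (n + 1) - (j + 1) = m + n - j from fun j => by omega,
            Nat.sub_zero, cf_zero, map_one, one_mul, cf_rec, map_add, add_mul, map_mul,
            Finset.sum_add_distrib]
          rw [← hB, hA]
          have harr : m + (n + 1) = m + n + 1 := by omega
          rw [harr]
          ring

theorem stmt5 (m n : ℕ) :
    PP m * PP n = ∑ i ∈ Finset.range (min m n + 1),
      Polynomial.C (bkp (m : ℤ) i * bkp (n : ℤ) i * bkp ((m : ℤ) + n) i / bfact i) *
        PP (m + n - i) := by
  rw [key_lemma m n]
  refine (Finset.sum_subset ?_ ?_).symm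
  · apply Finset.range_subset_range.mpr
    omega
  · intro i hi hni
    simp only [Finset.mem_range] at hi hni
    have hmi : m < i := by omega
    rw [cf_eq_zero' hmi, map_zero, zero_mul]
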